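/- arXiv:1806.11247 — 2 statements merged into one kernel-verified Lean document; each statement's English description precedes it below -/
import Mathlib

section
/- Let ι be a countable index type, c : ι → ℝ a family of nonnegative reals whose support {i : cᵢ ≠ 0} is nonempty, and d : ι → ℝ. Assume d attains a minimum value d₀ on the support of c, and that for every j ∈ ℕ the family (cᵢ·2^{-2dᵢj})ᵢ is summable. Then lim_{j→∞} (log ∑ᵢ cᵢ·2^{-2dᵢj}) / (−2j·log 2) = d₀. -/
open Filter

/-- **The degree equals the minimal homogeneous degree** (the abstract computation
behind Corollary 2.11 of Chen–Sun, "Analytic tangent cones of admissible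
Hermitian-Yang-Mills connections"): if `c i ≥ 0` has nonempty support, `d` attains
a minimum `d₀` on the support of `c`, and each `∑ᵢ cᵢ 2^{-2dᵢ j}` is summable, then
`lim_{j→∞} (log ∑ᵢ cᵢ 2^{-2dᵢ j}) / (−2 j log 2) = d₀`. -/
theorem degree_limit_eq_min
    {ι : Type*} [Countable ι] (c d : ι → ℝ) (hc : ∀ i, 0 ≤ c i) (d₀ : ℝ)
    (hmem : ∃ i₀, c i₀ ≠ 0 ∧ d i₀ = d₀)
    (hmin : ∀ i, c i ≠ 0 → d₀ ≤ d i)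
    (hsum : ∀ j : ℕ, Summable (fun i => c i * (2 : ℝ) ^ (-(2 * d i * (j : ℝ))))) :
    Tendsto
      (fun j : ℕ =>
        Real.log (∑' i, c i * (2 : ℝ) ^ (-(2 * d i * (j : ℝ))))
          / (-(2 * (j : ℝ)) * Real.log 2))
      atTop (nhds d₀) := by
  obtain ⟨i₀, hi₀, hd₀⟩ := hmem
  have hc₀ : 0 < c i₀ := lt_of_le_of_ne (hc i₀) (Ne.symm hi₀)
  set S : ℕ → ℝ := fun j => ∑' i, c i * (2 : ℝ) ^ (-(2 * d i * (j : ℝ))) with hS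
  have hterm_nonneg : ∀ (j : ℕ) (i : ι), 0 ≤ c i * (2 : ℝ) ^ (-(2 * d i * (j : ℝ))) :=
    fun j i => mul_nonneg (hc i) (Real.rpow_nonneg (by norm_num) _)
  have hSpos : ∀ j : ℕ, 0 < S j := by
    intro j
    exact Summable.tsum_pos (hsum j) (fun i => hterm_nonneg j i) i₀
      (mul_pos hc₀ (Real.rpow_pos_of_pos (by norm_num) _))
  -- lower bound for S j
  have hSlo : ∀ j : ℕ, c i₀ * (2 : ℝ) ^ (-(2 * d₀ * (j : ℝ))) ≤ S j := by
    intro j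
    have := Summable.le_tsum (hsum j) i₀ (fun i _ => hterm_nonneg j i)
    rwa [hd₀] at this
  -- upper bound: S j ≤ C * 2^{-2 d₀ (j-1)} for j ≥ 1, C := S 1
  set C : ℝ := S 1 with hC
  have hCpos : 0 < C := hSpos 1
  have hsum1 : Summable (fun i => c i * (2 : ℝ) ^ (-(2 * d i * (1 : ℝ)))) := by
    have := hsum 1
    simpa using this
  have hCeq : C = ∑' i, c i * (2 : ℝ) ^ (-(2 * d i * (1 : ℝ))) := by
    rw [hC, hS]
    norm_num
  have hShi : ∀ j : ℕ, 1 ≤ j → S j ≤ C * (2 : ℝ) ^ (-(2 * d₀ * ((j : ℝ) - 1))) := by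
    intro j hj
    have h1j : (1 : ℝ) ≤ (j : ℝ) := by exact_mod_cast hj
    have key : ∀ i, c i * (2 : ℝ) ^ (-(2 * d i * (j : ℝ))) ≤
        (c i * (2 : ℝ) ^ (-(2 * d i * (1 : ℝ)))) * (2 : ℝ) ^ (-(2 * d₀ * ((j : ℝ) - 1))) := by
      intro i
      rcases eq_or_ne (c i) 0 with h | h
      · simp [h]
      · have hdi : d₀ ≤ d i := hmin i h
        have : (2 : ℝ) ^ (-(2 * d i * (j : ℝ))) ≤
            (2 : ℝ) ^ (-(2 * d i * (1 : ℝ))) * (2 : ℝ) ^ (-(2 * d₀ * ((j : ℝ) - 1))) := by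
          have e : -(2 * d i * (j : ℝ)) = -(2 * d i * (1 : ℝ)) + -(2 * d i * ((j : ℝ) - 1)) := by
            ring
          rw [e, Real.rpow_add two_pos]
          refine mul_le_mul_of_nonneg_left ?_ (Real.rpow_nonneg (by norm_num) _)
          exact Real.rpow_le_rpow_of_exponent_le one_le_two (by nlinarith)
        calc c i * (2 : ℝ) ^ (-(2 * d i * (j : ℝ)))
            ≤ c i * ((2 : ℝ) ^ (-(2 * d i * (1 : ℝ))) * (2 : ℝ) ^ (-(2 * d₀ * ((j : ℝ) - 1)))) :=
              mul_le_mul_of_nonneg_left this (hc i)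
          _ = (c i * (2 : ℝ) ^ (-(2 * d i * (1 : ℝ)))) * (2 : ℝ) ^ (-(2 * d₀ * ((j : ℝ) - 1))) := by
              ring
    have hsum' : Summable (fun i =>
        (c i * (2 : ℝ) ^ (-(2 * d i * (1 : ℝ)))) * (2 : ℝ) ^ (-(2 * d₀ * ((j : ℝ) - 1)))) := by
      exact hsum1.mul_right _
    calc S j ≤ ∑' i, (c i * (2 : ℝ) ^ (-(2 * d i * (1 : ℝ)))) * (2 : ℝ) ^ (-(2 * d₀ * ((j : ℝ) - 1))) :=
          Summable.tsum_le_tsum key (hsum j) hsum'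
      _ = C * (2 : ℝ) ^ (-(2 * d₀ * ((j : ℝ) - 1))) := by
          rw [tsum_mul_right, ← hCeq]
  -- the squeeze
  have hlog2 : (0:ℝ) < Real.log 2 := Real.log_pos one_lt_two
  have hlog2' : Real.log 2 ≠ 0 := ne_of_gt hlog2
  have hub : ∀ j : ℕ, 1 ≤ j →
      Real.log (S j) / (-(2 * (j : ℝ)) * Real.log 2)
        ≤ d₀ - Real.log (c i₀) / (2 * Real.log 2) * (1 / (j : ℝ)) := by
    intro j hj
    have hjR : (1:ℝ) ≤ (j : ℝ) := by exact_mod_cast hj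
    have hjne : (j : ℝ) ≠ 0 := by positivity
    have hD : -(2 * (j : ℝ)) * Real.log 2 < 0 := by nlinarith
    have hlb : Real.log (c i₀) + -(2 * d₀ * (j : ℝ)) * Real.log 2 ≤ Real.log (S j) := by
      have h1 : Real.log (c i₀ * (2 : ℝ) ^ (-(2 * d₀ * (j : ℝ)))) ≤ Real.log (S j) :=
        Real.log_le_log (mul_pos hc₀ (Real.rpow_pos_of_pos two_pos _)) (hSlo j)
      rwa [Real.log_mul (ne_of_gt hc₀) (ne_of_gt (Real.rpow_pos_of_pos two_pos _)),
        Real.log_rpow two_pos] at h1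
    have := (div_le_div_right_of_neg hD).mpr hlb
    calc Real.log (S j) / (-(2 * (j : ℝ)) * Real.log 2)
        ≤ (Real.log (c i₀) + -(2 * d₀ * (j : ℝ)) * Real.log 2) /
            (-(2 * (j : ℝ)) * Real.log 2) := this
      _ = d₀ - Real.log (c i₀) / (2 * Real.log 2) * (1 / (j : ℝ)) := by
          field_simp
          ring
  have hlb : ∀ j : ℕ, 1 ≤ j →
      d₀ - d₀ * (1 / (j : ℝ)) - Real.log C / (2 * Real.log 2) * (1 / (j : ℝ))
        ≤ Real.log (S j) / (-(2 * (j : ℝ)) * Real.log 2) := by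
    intro j hj
    have hjR : (1:ℝ) ≤ (j : ℝ) := by exact_mod_cast hj
    have hjne : (j : ℝ) ≠ 0 := by positivity
    have hD : -(2 * (j : ℝ)) * Real.log 2 < 0 := by nlinarith
    have hub' : Real.log (S j) ≤ Real.log C + -(2 * d₀ * ((j : ℝ) - 1)) * Real.log 2 := by
      have h1 : Real.log (S j) ≤ Real.log (C * (2 : ℝ) ^ (-(2 * d₀ * ((j : ℝ) - 1)))) :=
        Real.log_le_log (hSpos j) (hShi j hj)
      rwa [Real.log_mul (ne_of_gt hCpos) (ne_of_gt (Real.rpow_pos_of_pos two_pos _)),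
        Real.log_rpow two_pos] at h1
    have := (div_le_div_right_of_neg hD).mpr hub'
    calc d₀ - d₀ * (1 / (j : ℝ)) - Real.log C / (2 * Real.log 2) * (1 / (j : ℝ))
        = (Real.log C + -(2 * d₀ * ((j : ℝ) - 1)) * Real.log 2) /
            (-(2 * (j : ℝ)) * Real.log 2) := by
          field_simp
          ring
      _ ≤ Real.log (S j) / (-(2 * (j : ℝ)) * Real.log 2) := this
  have hinv : Tendsto (fun j : ℕ => 1 / (j : ℝ)) atTop (nhds 0) :=
    tendsto_one_div_atTop_nhds_zero_nat
  have hg : Tendsto (fun j : ℕ =>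
      d₀ - d₀ * (1 / (j : ℝ)) - Real.log C / (2 * Real.log 2) * (1 / (j : ℝ)))
      atTop (nhds d₀) := by
    have h0 : Tendsto (fun j : ℕ =>
        d₀ - d₀ * (1 / (j : ℝ)) - Real.log C / (2 * Real.log 2) * (1 / (j : ℝ)))
        atTop (nhds (d₀ - d₀ * 0 - Real.log C / (2 * Real.log 2) * 0)) :=
      (tendsto_const_nhds.sub (tendsto_const_nhds.mul hinv)).sub
        (tendsto_const_nhds.mul hinv)
    simpa using h0
  have hh : Tendsto (fun j : ℕ =>
      d₀ - Real.log (c i₀) / (2 * Real.log 2) * (1 / (j : ℝ))) atTop (nhds d₀) := by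
    have h0 : Tendsto (fun j : ℕ =>
        d₀ - Real.log (c i₀) / (2 * Real.log 2) * (1 / (j : ℝ)))
        atTop (nhds (d₀ - Real.log (c i₀) / (2 * Real.log 2) * 0)) :=
      tendsto_const_nhds.sub (tendsto_const_nhds.mul hinv)
    simpa using h0
  exact tendsto_of_tendsto_of_tendsto_of_le_of_le' hg hh
    (eventually_atTop.mpr ⟨1, hlb⟩) (eventually_atTop.mpr ⟨1, hub⟩)
end

section
/- Let n ≥ 1, m ≥ 1, and let s be a holomorphic ℂ^m-valued function on the open unit ball B ⊂ ℂⁿ, with power series expansion at 0 given by a formal multilinear series p converging on B; for d ∈ ℕ let s_d(z) := p_d(z,…,z) denote the degree-d homogeneous part of s. Then for every integer k ≥ 1, ∫_{A(2^{-k-1}, 2^{-k})} ‖s(z)‖² dV(z) = ∑_{d ∈ ℕ} 2^{-(2d+2n)(k−1)} · ∫_{A(1/4,1/2)} ‖s_d(z)‖² dV(z). -/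
open MeasureTheory

/-- Lebesgue measure on `ℂⁿ ≅ ℝ^{2n}`, via the identification of
`EuclideanSpace ℂ (Fin n)` with `Fin n → ℂ`. -/
noncomputable instance (n : ℕ) : MeasureSpace (EuclideanSpace ℂ (Fin n)) :=
  { volume := Measure.map (WithLp.toLp 2) (volume : Measure (Fin n → ℂ)) }

/-- The open annulus `{z ∈ ℂⁿ : a < ‖z‖ < b}`. -/
def annulus (n : ℕ) (a b : ℝ) : Set (EuclideanSpace ℂ (Fin n)) :=
  {z | a < ‖z‖ ∧ ‖z‖ < b}

section Aux

instance (n : ℕ) : BorelSpace (EuclideanSpace ℂ (Fin n)) :=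
  inferInstance

instance (n : ℕ) : (volume : Measure (EuclideanSpace ℂ (Fin n))).IsAddHaarMeasure :=
  (PiLp.continuousLinearEquiv 2 ℝ (fun _ : Fin n => ℂ)).symm.isAddHaarMeasure_map
    (volume : Measure (Fin n → ℂ))

lemma finrank_E (n : ℕ) : Module.finrank ℝ (EuclideanSpace ℂ (Fin n)) = 2 * n := by
  have h : Module.finrank ℝ (EuclideanSpace ℂ (Fin n)) = Module.finrank ℝ (Fin n → ℂ) :=
    (WithLp.linearEquiv 2 ℝ (Fin n → ℂ)).finrank_eq
  rw [h, Module.finrank_pi_fintype, Complex.finrank_real_complex]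
  simp [mul_comm]

lemma annulus_measurable (n : ℕ) (a b : ℝ) : MeasurableSet (annulus n a b) := by
  have : annulus n a b = {z : EuclideanSpace ℂ (Fin n) | a < ‖z‖} ∩ {z | ‖z‖ < b} := by
    ext z; simp [annulus, Set.mem_setOf_eq]
  rw [this]
  exact ((isOpen_lt continuous_const continuous_norm).inter
    (isOpen_lt continuous_norm continuous_const)).measurableSet

lemma annulus_subset_ball (n : ℕ) (a b : ℝ) :
    annulus n a b ⊆ Metric.closedBall (0 : EuclideanSpace ℂ (Fin n)) b := fun z hz => by
  simp only [Metric.mem_closedBall, dist_zero_right]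
  exact hz.2.le

lemma annulus_volume_lt_top (n : ℕ) (a b : ℝ) : volume (annulus n a b) < ⊤ :=
  lt_of_le_of_lt (measure_mono (annulus_subset_ball n a b)) measure_closedBall_lt_top

lemma integrableOn_annulus {n : ℕ} {F : Type*} [NormedAddCommGroup F]
    {g : EuclideanSpace ℂ (Fin n) → F} (hg : Continuous g) (a b : ℝ) :
    IntegrableOn g (annulus n a b) volume := by
  obtain ⟨C, hC⟩ := (isCompact_closedBall (0 : EuclideanSpace ℂ (Fin n)) b).exists_bound_of_continuousOn hg.continuousOn
  refine Measure.integrableOn_of_bounded (M := C) (annulus_volume_lt_top n a b).ne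
    hg.aestronglyMeasurable ?_
  exact ae_restrict_of_forall_mem (annulus_measurable n a b)
    (fun z hz => hC z (annulus_subset_ball n a b hz))

/-- Multiplication by a unit complex number, as a real linear isometry of ℂ. -/
noncomputable def rotC (c : ℂ) (hc : ‖c‖ = 1) : ℂ ≃ₗᵢ[ℝ] ℂ :=
  { toLinearEquiv := (LinearEquiv.smulOfNeZero ℂ ℂ c
      (by intro h; rw [h] at hc; simp at hc)).restrictScalars ℝ
    norm_map' := by intro x; simp [norm_smul, hc] }

lemma rotC_mp (c : ℂ) (hc : ‖c‖ = 1) :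
    MeasurePreserving (fun x : ℂ => c * x) volume volume := by
  exact (rotC c hc).measurePreserving

lemma rot_mp (n : ℕ) (c : ℂ) (hc : ‖c‖ = 1) :
    MeasurePreserving (fun z : EuclideanSpace ℂ (Fin n) => c • z) volume volume := by
  have h2 := measurePreserving_pi (fun _ : Fin n => (volume : Measure ℂ))
    (fun _ => volume) (f := fun _ x => c * x) (fun _ => rotC_mp c hc)
  have hm : Measurable (WithLp.toLp 2 : (Fin n → ℂ) → EuclideanSpace ℂ (Fin n)) :=
    (PiLp.continuousLinearEquiv 2 ℝ (fun _ : Fin n => ℂ)).symm.continuous.measurable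
  refine ⟨(continuous_const_smul c).measurable, ?_⟩
  show Measure.map _ (Measure.map (WithLp.toLp 2) (volume : Measure (Fin n → ℂ)))
    = Measure.map (WithLp.toLp 2) (volume : Measure (Fin n → ℂ))
  rw [Measure.map_map (continuous_const_smul c).measurable hm]
  have hcomp : (fun z : EuclideanSpace ℂ (Fin n) => c • z) ∘ WithLp.toLp 2
      = WithLp.toLp 2 ∘ (fun (x : Fin n → ℂ) (i : Fin n) => c * x i) := by
    funext x; ext i; simp
  have h2' : MeasurePreserving (fun (x : Fin n → ℂ) (i : Fin n) => c * x i) volume volume := h2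
  rw [hcomp, ← Measure.map_map hm h2'.measurable, h2'.map_eq]

/-- Rotation as a measurable equivalence. -/
noncomputable def rotE (n : ℕ) (c : ℂ) (hc : c ≠ 0) :
    EuclideanSpace ℂ (Fin n) ≃ᵐ EuclideanSpace ℂ (Fin n) where
  toEquiv := {
    toFun := fun z => c • z
    invFun := fun z => c⁻¹ • z
    left_inv := fun z => by simp [smul_smul, inv_mul_cancel₀ hc]
    right_inv := fun z => by simp [smul_smul, mul_inv_cancel₀ hc] }
  measurable_toFun := (continuous_const_smul c).measurable
  measurable_invFun := (continuous_const_smul c⁻¹).measurable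

lemma rot_setIntegral (n : ℕ) {F : Type*} [NormedAddCommGroup F] [NormedSpace ℝ F]
    (c : ℂ) (hc : ‖c‖ = 1) (a b : ℝ) (g : EuclideanSpace ℂ (Fin n) → F) :
    ∫ z in annulus n a b, g (c • z) = ∫ z in annulus n a b, g z := by
  have hc0 : c ≠ 0 := by intro h; rw [h] at hc; simp at hc
  have hemb : MeasurableEmbedding (fun z : EuclideanSpace ℂ (Fin n) => c • z) :=
    (rotE n c hc0).measurableEmbedding
  have hpre : (fun z : EuclideanSpace ℂ (Fin n) => c • z) ⁻¹' (annulus n a b)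
      = annulus n a b := by
    ext z
    simp only [Set.mem_preimage, annulus, Set.mem_setOf_eq, norm_smul, hc, one_mul]
  have h := (rot_mp n c hc).setIntegral_preimage_emb hemb g (annulus n a b)
  rw [hpre] at h
  exact h

lemma homog {n m d : ℕ} (p : FormalMultilinearSeries ℂ (EuclideanSpace ℂ (Fin n))
    (EuclideanSpace ℂ (Fin m))) (c : ℂ) (z : EuclideanSpace ℂ (Fin n)) :
    p d (fun _ => c • z) = c ^ d • p d (fun _ => z) := by
  have h := (p d).map_smul_univ (fun _ : Fin d => c) (fun _ => z)
  simpa using h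

lemma exists_rot (d e : ℕ) (hde : d < e) :
    ∃ c : ℂ, ‖c‖ = 1 ∧ (starRingEnd ℂ) c ^ d * c ^ e = -1 := by
  set θ : ℝ := Real.pi / ((e : ℝ) - d) with hθ
  refine ⟨Complex.exp (θ * Complex.I), by simpa using Complex.abs_exp_ofReal_mul_I θ, ?_⟩
  have hconj : (starRingEnd ℂ) (Complex.exp (θ * Complex.I))
      = Complex.exp (-(θ * Complex.I)) := by
    rw [← Complex.exp_conj]; congr 1; simp [Complex.conj_ofReal]
  rw [hconj, ← Complex.exp_nat_mul, ← Complex.exp_nat_mul, ← Complex.exp_add]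
  have hne : (e : ℝ) - d ≠ 0 := by
    have : (d : ℝ) < e := by exact_mod_cast hde
    linarith
  have hr : ((e : ℝ) - d) * θ = Real.pi := by rw [hθ]; field_simp
  have hc2 : ((e : ℂ) - d) * θ = Real.pi := by exact_mod_cast congrArg (Complex.ofReal) hr
  have h3 : (d : ℂ) * -(θ * Complex.I) + e * (θ * Complex.I) = Real.pi * Complex.I := by
    linear_combination Complex.I * hc2
  rw [h3, Complex.exp_pi_mul_I]

/-- Orthogonality of distinct homogeneous pieces over an annulus. -/
lemma ortho {n m : ℕ} (p : FormalMultilinearSeries ℂ (EuclideanSpace ℂ (Fin n))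
    (EuclideanSpace ℂ (Fin m))) (a b : ℝ) {d e : ℕ} (hde : d ≠ e) :
    ∫ z in annulus n a b,
      (inner ℂ (p d fun _ => z) (p e fun _ => z) : ℂ) = 0 := by
  -- reduce to the case d < e by symmetry of the argument
  wlog hlt : d < e generalizing d e
  · have hlt' : e < d := by omega
    have h := this hde.symm hlt'
    have : ∫ z in annulus n a b, (inner ℂ (p d fun _ => z) (p e fun _ => z) : ℂ)
        = (starRingEnd ℂ) (∫ z in annulus n a b,
            (inner ℂ (p e fun _ => z) (p d fun _ => z) : ℂ)) := by
      rw [← integral_conj]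
      congr 1
      ext z
      rw [inner_conj_symm]
    rw [this, h, map_zero]
  obtain ⟨c, hc, hkey⟩ := exists_rot d e hlt
  have hrot := rot_setIntegral n c hc a b
    (fun z => (inner ℂ (p d fun _ => z) (p e fun _ => z) : ℂ))
  have hptw : ∀ z : EuclideanSpace ℂ (Fin n),
      (inner ℂ (p d fun _ => c • z) (p e fun _ => c • z) : ℂ)
        = -(inner ℂ (p d fun _ => z) (p e fun _ => z) : ℂ) := by
    intro z
    rw [homog p c z, homog p c z, inner_smul_left, inner_smul_right]
    rw [← mul_assoc, map_pow]
    rw [hkey]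
    ring
  have h2 : ∫ z in annulus n a b, (inner ℂ (p d fun _ => z) (p e fun _ => z) : ℂ)
      = -∫ z in annulus n a b, (inner ℂ (p d fun _ => z) (p e fun _ => z) : ℂ) := by
    conv_lhs => rw [← hrot]
    simp_rw [hptw]
    rw [integral_neg]
  have h3 : (2 : ℂ) * ∫ z in annulus n a b,
      (inner ℂ (p d fun _ => z) (p e fun _ => z) : ℂ) = 0 := by
    linear_combination h2
  simpa using h3

end Aux

open Pointwise

theorem key (n m : ℕ)
    (s : EuclideanSpace ℂ (Fin n) → EuclideanSpace ℂ (Fin m))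
    (p : FormalMultilinearSeries ℂ (EuclideanSpace ℂ (Fin n)) (EuclideanSpace ℂ (Fin m)))
    (hs : HasFPowerSeriesOnBall s p 0 1) (r : ℝ) (hr0 : 0 < r) (hr1 : r ≤ 1) :
    HasSum (fun d : ℕ => r ^ (2 * d) * ∫ z in annulus n (1/4) (1/2), ‖p d (fun _ => z)‖ ^ 2)
      (∫ z in annulus n (1/4) (1/2), ‖s (r • z)‖ ^ 2) := by
  set A := annulus n (1/4) (1/2) with hA
  set f : ℕ → EuclideanSpace ℂ (Fin n) → EuclideanSpace ℂ (Fin m) :=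
    fun d z => p d (fun _ => z) with hf
  have hfc : ∀ d, Continuous (f d) :=
    fun d => (p d).cont.comp (continuous_pi fun _ => continuous_id)
  have hInt : ∀ d e, IntegrableOn (fun z => (inner ℂ (f d z) (f e z) : ℂ)) A volume :=
    fun d e => integrableOn_annulus ((hfc d).inner (hfc e)) _ _
  have hJ : ∀ d e, d ≠ e → ∫ z in A, (inner ℂ (f d z) (f e z) : ℂ) = 0 :=
    fun d e h => ortho p _ _ h
  set G : ℕ → EuclideanSpace ℂ (Fin n) → EuclideanSpace ℂ (Fin m) :=
    fun N z => ∑ d ∈ Finset.range N, (r : ℂ) ^ d • f d z with hG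
  -- Pythagoras for partial sums
  have hGinner : ∀ N z, (inner ℂ (G N z) (G N z) : ℂ)
      = ∑ d ∈ Finset.range N, ∑ e ∈ Finset.range N,
          ((starRingEnd ℂ) ((r : ℂ) ^ d) * (r : ℂ) ^ e) * inner ℂ (f d z) (f e z) := by
    intro N z
    rw [hG]
    simp only
    rw [sum_inner]
    refine Finset.sum_congr rfl fun d _ => ?_
    rw [inner_sum]
    refine Finset.sum_congr rfl fun e _ => ?_
    rw [inner_smul_left, inner_smul_right]
    ring
  have hIntdbl : ∀ N, IntegrableOn (fun z => (inner ℂ (G N z) (G N z) : ℂ)) A volume := by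
    intro N
    have h := integrable_finset_sum (μ := volume.restrict A) (Finset.range N)
      (fun d _ => integrable_finset_sum (μ := volume.restrict A) (Finset.range N)
        (fun e _ => (hInt d e).const_mul ((starRingEnd ℂ) ((r : ℂ) ^ d) * (r : ℂ) ^ e)))
    exact h.congr (Filter.Eventually.of_forall fun z => (hGinner N z).symm)
  have hPyth : ∀ N, ∫ z in A, ‖G N z‖ ^ 2
      = ∑ d ∈ Finset.range N, r ^ (2 * d) * ∫ z in A, ‖f d z‖ ^ 2 := by
    intro N
    have h1 : ∫ z in A, ‖G N z‖ ^ 2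
        = ∫ z in A, Complex.re (inner ℂ (G N z) (G N z) : ℂ) := by
      refine integral_congr_ae (Filter.Eventually.of_forall fun z => ?_)
      have := inner_self_eq_norm_sq (𝕜 := ℂ) (G N z)
      simpa using this.symm
    have h2 : ∫ z in A, Complex.re (inner ℂ (G N z) (G N z) : ℂ)
        = Complex.re (∫ z in A, (inner ℂ (G N z) (G N z) : ℂ)) := by
      have := integral_re (μ := volume.restrict A) (hIntdbl N)
      simpa using this
    have h3 : ∫ z in A, (inner ℂ (G N z) (G N z) : ℂ)
        = ∑ d ∈ Finset.range N, ∑ e ∈ Finset.range N,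
          ((starRingEnd ℂ) ((r : ℂ) ^ d) * (r : ℂ) ^ e)
            * ∫ z in A, (inner ℂ (f d z) (f e z) : ℂ) := by
      rw [integral_congr_ae (Filter.Eventually.of_forall fun z => hGinner N z)]
      rw [integral_finset_sum _ fun d _ => integrable_finset_sum _
        fun e _ => (hInt d e).const_mul _]
      refine Finset.sum_congr rfl fun d _ => ?_
      rw [integral_finset_sum _ fun e _ => (hInt d e).const_mul _]
      refine Finset.sum_congr rfl fun e _ => ?_
      simpa [smul_eq_mul] using integral_smul (μ := volume.restrict A)
        ((starRingEnd ℂ) ((r : ℂ) ^ d) * (r : ℂ) ^ e)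
        (fun z => (inner ℂ (f d z) (f e z) : ℂ))
    have h4 : ∑ d ∈ Finset.range N, ∑ e ∈ Finset.range N,
          ((starRingEnd ℂ) ((r : ℂ) ^ d) * (r : ℂ) ^ e)
            * ∫ z in A, (inner ℂ (f d z) (f e z) : ℂ)
        = ∑ d ∈ Finset.range N, (((r ^ (2 * d) : ℝ)) : ℂ)
            * ∫ z in A, (inner ℂ (f d z) (f d z) : ℂ) := by
      refine Finset.sum_congr rfl fun d hd => ?_
      rw [Finset.sum_eq_single_of_mem d hd]
      · congr 1
        have : ((r : ℂ) ^ d) = (((r ^ d : ℝ)) : ℂ) := by push_cast; ring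
        rw [this, Complex.conj_ofReal]
        push_cast
        ring
      · intro e _ hne
        rw [hJ d e (Ne.symm hne), mul_zero]
    rw [h1, h2, h3, h4, Complex.re_sum]
    refine Finset.sum_congr rfl fun d _ => ?_
    rw [Complex.re_ofReal_mul]
    congr 1
    have h5 : ∫ z in A, Complex.re (inner ℂ (f d z) (f d z) : ℂ)
        = Complex.re (∫ z in A, (inner ℂ (f d z) (f d z) : ℂ)) := by
      have := integral_re (μ := volume.restrict A) (hInt d d)
      simpa using this
    rw [← h5]
    refine integral_congr_ae (Filter.Eventually.of_forall fun z => ?_)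
    have h6 := inner_self_eq_norm_sq (𝕜 := ℂ) (f d z)
    simpa using h6
  -- summability of the majorant
  have hCs : Summable (fun d => ‖p d‖ * (1/2 : ℝ) ^ d) := by
    have h := p.summable_norm_mul_pow (r := (1/2 : NNReal))
      (by
        refine lt_of_lt_of_le ?_ hs.r_le
        rw [show ((1/2 : NNReal) : ENNReal) = (1/2 : ENNReal) by norm_num]
        norm_num)
    simpa using h
  set C : ℝ := ∑' d, ‖p d‖ * (1/2 : ℝ) ^ d with hC
  have hbound : ∀ N, ∀ z ∈ A, ‖G N z‖ ≤ C := by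
    intro N z hz
    have hz2 : ‖z‖ ≤ 1/2 := hz.2.le
    calc ‖G N z‖ ≤ ∑ d ∈ Finset.range N, ‖(r : ℂ) ^ d • f d z‖ := norm_sum_le _ _
      _ ≤ ∑ d ∈ Finset.range N, ‖p d‖ * (1/2 : ℝ) ^ d := by
          refine Finset.sum_le_sum fun d _ => ?_
          rw [norm_smul]
          have h1 : ‖(r : ℂ) ^ d‖ ≤ 1 := by
            rw [norm_pow, Complex.norm_real, Real.norm_of_nonneg hr0.le]
            exact pow_le_one₀ hr0.le hr1
          have h2 : ‖f d z‖ ≤ ‖p d‖ * (1/2 : ℝ) ^ d := by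
            have := (p d).le_opNorm (fun _ => z)
            simp only [Finset.prod_const, Finset.card_univ, Fintype.card_fin] at this
            refine this.trans ?_
            exact mul_le_mul_of_nonneg_left
              (pow_le_pow_left₀ (norm_nonneg _) hz2 d) (norm_nonneg _)
          calc ‖(r : ℂ) ^ d‖ * ‖f d z‖ ≤ 1 * (‖p d‖ * (1/2 : ℝ) ^ d) :=
                mul_le_mul h1 h2 (norm_nonneg _) zero_le_one
            _ = ‖p d‖ * (1/2 : ℝ) ^ d := one_mul _
      _ ≤ C := by
          refine hCs.sum_le_tsum _ (fun d _ => ?_)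
          positivity
  -- pointwise convergence
  have hptw : ∀ z ∈ A, Filter.Tendsto (fun N => ‖G N z‖ ^ 2)
      Filter.atTop (nhds (‖s (r • z)‖ ^ 2)) := by
    intro z hz
    have hy : r • z ∈ Metric.eball (0 : EuclideanSpace ℂ (Fin n)) 1 := by
      rw [EMetric.mem_ball, edist_zero_right]
      have hn : ‖r • z‖ < 1 := by
        rw [norm_smul, Real.norm_of_nonneg hr0.le]
        have : ‖z‖ < 1/2 := hz.2
        nlinarith [hr0.le, norm_nonneg z]
      rw [enorm_eq_nnnorm]
      exact_mod_cast (by exact_mod_cast hn : (‖r • z‖₊ : NNReal) < 1)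
    have hsum := (hs.hasSum hy)
    rw [zero_add] at hsum
    have hterm : ∀ d, p d (fun _ => r • z) = (r : ℂ) ^ d • f d z := by
      intro d
      have hsz : r • z = (r : ℂ) • z := by
        rw [← algebraMap_smul ℂ r z, Complex.coe_algebraMap]
      rw [hsz, homog p]
    have htend : Filter.Tendsto (fun N => G N z) Filter.atTop (nhds (s (r • z))) := by
      have := hsum.tendsto_sum_nat
      refine this.congr fun N => ?_
      exact Finset.sum_congr rfl fun d _ => hterm d
    exact ((continuous_norm.pow 2).continuousAt.tendsto.comp htend)
  -- dominated convergence
  have hmainlim : Filter.Tendsto (fun N => ∫ z in A, ‖G N z‖ ^ 2)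
      Filter.atTop (nhds (∫ z in A, ‖s (r • z)‖ ^ 2)) := by
    refine tendsto_integral_of_dominated_convergence (fun _ => C ^ 2)
      (fun N => ?_) ?_ (fun N => ?_) ?_
    · have hGc : Continuous (G N) :=
        continuous_finset_sum _ fun d _ => by exact (hfc d).const_smul ((r : ℂ) ^ d)
      exact (hGc.norm.pow 2).aestronglyMeasurable
    · exact integrableOn_const (annulus_volume_lt_top n _ _).ne
    · refine ae_restrict_of_forall_mem (annulus_measurable n _ _) fun z hz => ?_
      rw [Real.norm_of_nonneg (by positivity)]
      exact pow_le_pow_left₀ (norm_nonneg _) (hbound N z hz) 2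
    · exact ae_restrict_of_forall_mem (annulus_measurable n _ _) hptw
  -- conclusion
  have hnonneg : ∀ d : ℕ, 0 ≤ r ^ (2 * d) * ∫ z in A, ‖f d z‖ ^ 2 := by
    intro d
    have : 0 ≤ ∫ z in A, ‖f d z‖ ^ 2 :=
      integral_nonneg fun z => by positivity
    positivity
  rw [hasSum_iff_tendsto_nat_of_nonneg hnonneg]
  refine hmainlim.congr fun N => hPyth N

/-- **Dyadic annulus `L²` expansion into homogeneous pieces** (used in the proof
of Proposition 2.25 of Chen–Sun, "Analytic tangent cones of admissible
Hermitian-Yang-Mills connections", following Lemma 3.4 of [CS1]): if `s` is the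
sum on the unit ball of a power series `p` centered at `0`, with homogeneous
pieces `s_d(z) = p_d(z,…,z)`, then for every `k ≥ 1`,
`∫_{A(2^{-k-1},2^{-k})} ‖s‖² = ∑_d 2^{-(2d+2n)(k-1)} ∫_{A(1/4,1/2)} ‖s_d‖²`. -/
theorem dyadic_annulus_expansion (n m : ℕ) (hn : 1 ≤ n) (hm : 1 ≤ m)
    (s : EuclideanSpace ℂ (Fin n) → EuclideanSpace ℂ (Fin m))
    (p : FormalMultilinearSeries ℂ (EuclideanSpace ℂ (Fin n))
      (EuclideanSpace ℂ (Fin m)))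
    (hs : HasFPowerSeriesOnBall s p 0 1) :
    ∀ k : ℕ, 1 ≤ k →
      ∫ z in annulus n ((2:ℝ) ^ (-(k:ℝ) - 1)) ((2:ℝ) ^ (-(k:ℝ))), ‖s z‖ ^ 2
        = ∑' d : ℕ, (2:ℝ) ^ (-((2 * (d:ℝ) + 2 * n) * ((k:ℝ) - 1))) *
            ∫ z in annulus n (1/4) (1/2), ‖p d (fun _ => z)‖ ^ 2 := by
  intro k hk
  set r : ℝ := (2:ℝ) ^ ((1:ℝ) - k) with hrdef
  have hr0 : 0 < r := Real.rpow_pos_of_pos two_pos _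
  have hr1 : r ≤ 1 := by
    refine Real.rpow_le_one_of_one_le_of_nonpos one_le_two ?_
    have : (1:ℝ) ≤ k := by exact_mod_cast hk
    linarith
  have hrinv : r * r⁻¹ = 1 := mul_inv_cancel₀ hr0.ne'
  -- identify the dyadic annulus as a rescaled unit annulus
  have hq1 : (2:ℝ) ^ (-(k:ℝ) - 1) = r / 4 := by
    rw [hrdef, show (-(k:ℝ) - 1) = ((1:ℝ) - k) + (-2) by ring,
      Real.rpow_add two_pos, show ((-2:ℝ)) = ((-2:ℤ):ℝ) by norm_num,
      Real.rpow_intCast]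
    norm_num
    ring
  have hq2 : (2:ℝ) ^ (-(k:ℝ)) = r / 2 := by
    rw [hrdef, show (-(k:ℝ)) = ((1:ℝ) - k) + (-1) by ring,
      Real.rpow_add two_pos, show ((-1:ℝ)) = ((-1:ℤ):ℝ) by norm_num,
      Real.rpow_intCast]
    norm_num
    ring
  have hset : r • annulus n (1/4) (1/2)
      = annulus n ((2:ℝ) ^ (-(k:ℝ) - 1)) ((2:ℝ) ^ (-(k:ℝ))) := by
    ext z
    rw [Set.mem_smul_set_iff_inv_smul_mem₀ hr0.ne']
    simp only [annulus, Set.mem_setOf_eq, norm_smul, norm_inv,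
      Real.norm_of_nonneg hr0.le, hq1, hq2]
    constructor
    · rintro ⟨h1, h2⟩
      constructor
      · nlinarith [norm_nonneg z]
      · nlinarith [norm_nonneg z]
    · rintro ⟨h1, h2⟩
      constructor
      · nlinarith [norm_nonneg z]
      · nlinarith [norm_nonneg z]
  -- change of variables
  have hch := Measure.setIntegral_comp_smul_of_pos (volume)
    (fun z : EuclideanSpace ℂ (Fin n) => ‖s z‖ ^ 2) (annulus n (1/4) (1/2)) hr0
  rw [finrank_E] at hch
  have hLHS : ∫ z in annulus n ((2:ℝ) ^ (-(k:ℝ) - 1)) ((2:ℝ) ^ (-(k:ℝ))), ‖s z‖ ^ 2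
      = r ^ (2 * n) * ∫ z in annulus n (1/4) (1/2), ‖s (r • z)‖ ^ 2 := by
    rw [← hset, hch, smul_eq_mul, ← mul_assoc,
      mul_inv_cancel₀ (pow_ne_zero _ hr0.ne'), one_mul]
  -- the expansion on the unit annulus
  have hkey := (key n m s p hs r hr0 hr1).mul_left (r ^ (2 * n))
  have hpow : ∀ d : ℕ, r ^ (2 * n) * r ^ (2 * d)
      = (2:ℝ) ^ (-((2 * (d:ℝ) + 2 * n) * ((k:ℝ) - 1))) := by
    intro d
    rw [← pow_add, hrdef, ← Real.rpow_natCast ((2:ℝ) ^ ((1:ℝ) - k)) (2*n + 2*d),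
      ← Real.rpow_mul (by norm_num : (0:ℝ) ≤ 2)]
    congr 1
    push_cast
    ring
  have hfun : (fun d : ℕ => r ^ (2 * n) * (r ^ (2 * d) *
        ∫ z in annulus n (1/4) (1/2), ‖p d (fun _ => z)‖ ^ 2))
      = fun d : ℕ => (2:ℝ) ^ (-((2 * (d:ℝ) + 2 * n) * ((k:ℝ) - 1))) *
        ∫ z in annulus n (1/4) (1/2), ‖p d (fun _ => z)‖ ^ 2 :=
    funext fun d => by rw [← mul_assoc, hpow d]
  rw [hfun] at hkey
  rw [hLHS]
  exact hkey.tsum_eq.symm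
end
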